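/- Let μ_1, μ_2 > 0 and 0 ≤ β ≤ μ_1, let D := [[−μ_1, β], [0, −μ_2]], and let π ∈ ℝ² be a probability row vector such that (π, D) represents the unit exponential distribution. Set M := (−D)^{−1}, m := M·𝟙, d := −D·𝟙, ψ := π·M·diag(d) and A := π·M·M·diag(d). Then for every 2×2 real matrix ν with nonnegative entries satisfying Σ_{i} ν(i,j) = π_j for each j and Σ_{j} ν(i,j) = ψ_i for each i, and for every vector a ∈ ℝ² satisfying ψ_i · a_i = A_i for i = 1,2, one has Σ_{i=1}^{2} Σ_{j=1}^{2} ν(i,j) · a_i · m_j = 1. (Hence a Markovian arrival process with acyclic matrix D_0 of order 2 and unit exponential marginal distribution has coefficient of autocorrelation 0; order at least 3 is needed for non-zero autocorrelation.) -/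

import Mathlib

open Matrix

/-- `(π, D)` represents the unit exponential distribution:
`π · exp(tD) · 𝟙 = e^{-t}` for all `t ≥ 0`. -/
def ReprUnitExp {n : ℕ} (π : Fin n → ℝ) (D : Matrix (Fin n) (Fin n) ℝ) : Prop :=
  ∀ t : ℝ, 0 ≤ t → (π ᵥ* NormedSpace.exp (t • D)) ⬝ᵥ (fun _ => 1) = Real.exp (-t)

lemma exp_deriv_step (π v : Fin 2 → ℝ) (D : Matrix (Fin 2) (Fin 2) ℝ) (c : ℝ)
    (h : ∀ t : ℝ, 0 ≤ t → (π ᵥ* NormedSpace.exp (t • D)) ⬝ᵥ v = c * Real.exp (-t)) :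
    ∀ t : ℝ, 0 ≤ t → (π ᵥ* NormedSpace.exp (t • D)) ⬝ᵥ (D *ᵥ v) = (-c) * Real.exp (-t) := by
  letI : SeminormedRing (Matrix (Fin 2) (Fin 2) ℝ) := Matrix.linftyOpSemiNormedRing
  letI : NormedRing (Matrix (Fin 2) (Fin 2) ℝ) := Matrix.linftyOpNormedRing
  letI : NormedAlgebra ℝ (Matrix (Fin 2) (Fin 2) ℝ) := Matrix.linftyOpNormedAlgebra
  have hLlin : IsLinearMap ℝ (fun X : Matrix (Fin 2) (Fin 2) ℝ => π ⬝ᵥ (X *ᵥ v)) := by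
    constructor
    · intro X Y; simp [Matrix.add_mulVec, dotProduct_add]; ring
    · intro r X; simp [Matrix.smul_mulVec, dotProduct_smul]; ring
  let L : Matrix (Fin 2) (Fin 2) ℝ →L[ℝ] ℝ :=
    LinearMap.toContinuousLinearMap (IsLinearMap.mk' _ hLlin)
  have hLapp : ∀ X, L X = π ⬝ᵥ (X *ᵥ v) := fun X => rfl
  have hcont : Continuous fun t : ℝ => (π ᵥ* NormedSpace.exp (t • D)) ⬝ᵥ (D *ᵥ v) := by
    letI : NormedAlgebra ℚ (Matrix (Fin 2) (Fin 2) ℝ) := NormedAlgebra.restrictScalars ℚ ℝ _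
    have : Continuous fun t : ℝ => NormedSpace.exp (t • D) :=
      NormedSpace.exp_continuous.comp (continuous_id.smul continuous_const)
    have h2 : Continuous fun t : ℝ => L (NormedSpace.exp (t • D) * D) :=
      L.continuous.comp (this.mul continuous_const)
    have h3 : (fun t : ℝ => (π ᵥ* NormedSpace.exp (t • D)) ⬝ᵥ (D *ᵥ v))
        = fun t => L (NormedSpace.exp (t • D) * D) := by
      funext u
      rw [hLapp]
      rw [← Matrix.mulVec_mulVec, Matrix.dotProduct_mulVec π]
    rw [h3]; exact h2
  have key : ∀ t : ℝ, 0 < t →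
      (π ᵥ* NormedSpace.exp (t • D)) ⬝ᵥ (D *ᵥ v) = (-c) * Real.exp (-t) := by
    intro t ht
    have hexp : HasDerivAt (fun u : ℝ => NormedSpace.exp (u • D))
        (NormedSpace.exp (t • D) * D) t := hasDerivAt_exp_smul_const D t
    have hf : HasDerivAt (fun u : ℝ => L (NormedSpace.exp (u • D)))
        (L (NormedSpace.exp (t • D) * D)) t :=
      L.hasFDerivAt.comp_hasDerivAt t hexp
    have hg : HasDerivAt (fun u : ℝ => c * Real.exp (-u)) ((-c) * Real.exp (-t)) t := by
      have h1 : HasDerivAt (fun u : ℝ => Real.exp (-u)) (-Real.exp (-t)) t := by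
        simpa using (hasDerivAt_neg t).exp
      simpa [mul_comm, mul_assoc, mul_left_comm] using h1.const_mul c
    have heq : (fun u : ℝ => L (NormedSpace.exp (u • D)))
        =ᶠ[nhds t] fun u : ℝ => c * Real.exp (-u) := by
      filter_upwards [Ioi_mem_nhds ht] with u hu
      rw [hLapp, Matrix.dotProduct_mulVec]
      exact h u (le_of_lt hu)
    have hf' : HasDerivAt (fun u : ℝ => L (NormedSpace.exp (u • D)))
        ((-c) * Real.exp (-t)) t := hg.congr_of_eventuallyEq heq
    have huniq := hf.unique hf'
    rw [hLapp] at huniq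
    rw [← huniq]
    rw [← Matrix.mulVec_mulVec, Matrix.dotProduct_mulVec π]
  intro t ht
  rcases eq_or_lt_of_le ht with rfl | ht'
  · have hcl : Set.Ici (0:ℝ) ⊆ {t : ℝ | (π ᵥ* NormedSpace.exp (t • D)) ⬝ᵥ (D *ᵥ v)
        = (-c) * Real.exp (-t)} := by
      rw [← closure_Ioi (0:ℝ)]
      apply (IsClosed.closure_subset_iff ?_).2
      · intro u hu; exact key u hu
      · exact isClosed_eq hcont (by continuity)
    exact hcl Set.self_mem_Ici
  · exact key t ht'

theorem stmt17 (μ₁ μ₂ β : ℝ) (hμ₁ : 0 < μ₁) (hμ₂ : 0 < μ₂)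
    (hβ0 : 0 ≤ β) (hβ : β ≤ μ₁)
    (D : Matrix (Fin 2) (Fin 2) ℝ) (hD : D = !![-μ₁, β; 0, -μ₂])
    (π : Fin 2 → ℝ) (hπnn : ∀ i, 0 ≤ π i) (hπsum : ∑ i, π i = 1)
    (hrep : ReprUnitExp π D)
    (M : Matrix (Fin 2) (Fin 2) ℝ) (hM : M = (-D)⁻¹)
    (m d ψ A : Fin 2 → ℝ)
    (hm : m = M *ᵥ (fun _ => 1)) (hd : d = (-D) *ᵥ (fun _ => 1))
    (hψ : ψ = π ᵥ* (M * Matrix.diagonal d))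
    (hA : A = π ᵥ* (M * M * Matrix.diagonal d))
    (ν : Matrix (Fin 2) (Fin 2) ℝ) (hνnn : ∀ i j, 0 ≤ ν i j)
    (hνcol : ∀ j, ∑ i, ν i j = π j) (hνrow : ∀ i, ∑ j, ν i j = ψ i)
    (a : Fin 2 → ℝ) (ha : ∀ i, ψ i * a i = A i) :
    ∑ i, ∑ j, ν i j * a i * m j = 1 := by
  have hμ₁' : μ₁ ≠ 0 := ne_of_gt hμ₁
  have hμ₂' : μ₂ ≠ 0 := ne_of_gt hμ₂
  -- derive the two moment conditions from the representation
  have s1 := exp_deriv_step π (fun _ => 1) D 1 (fun t ht => by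
    rw [one_mul]; exact hrep t ht)
  have s2 := exp_deriv_step π (D *ᵥ fun _ => 1) D (-1) s1
  have c1 : π ⬝ᵥ (D *ᵥ (fun _ => 1)) = -1 := by
    have h0 := s1 0 le_rfl
    simpa [NormedSpace.exp_zero] using h0
  have c2 : π ⬝ᵥ (D *ᵥ (D *ᵥ (fun _ => 1))) = 1 := by
    have h0 := s2 0 le_rfl
    simpa [NormedSpace.exp_zero] using h0
  -- explicit inverse
  have hMex : M = !![1/μ₁, β/(μ₁*μ₂); 0, 1/μ₂] := by
    have h : !![1/μ₁, β/(μ₁*μ₂); 0, 1/μ₂] * (-D) = 1 := by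
      subst hD
      ext i j
      fin_cases i <;> fin_cases j <;>
        · simp [Matrix.mul_apply, Fin.sum_univ_two]
          try field_simp
          try ring
    rw [hM, Matrix.inv_eq_left_inv h]
  -- scalar versions of all data
  have hd0 : d 0 = μ₁ - β := by
    simp [hd, hD, Matrix.mulVec, dotProduct, Fin.sum_univ_two]; ring
  have hd1 : d 1 = μ₂ := by
    simp [hd, hD, Matrix.mulVec, dotProduct, Fin.sum_univ_two]
  have hm0 : μ₁ * μ₂ * m 0 = μ₂ + β := by
    simp [hm, hMex, Matrix.mulVec, dotProduct, Fin.sum_univ_two]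
    field_simp
  have hm1 : μ₂ * m 1 = 1 := by
    simp [hm, hMex, Matrix.mulVec, dotProduct, Fin.sum_univ_two]
    field_simp
  have hMM : M * M = !![1/(μ₁^2), β/(μ₁*μ₂)*(1/μ₁+1/μ₂); 0, 1/(μ₂^2)] := by
    rw [hMex]
    ext i j
    fin_cases i <;> fin_cases j <;>
      · simp [Matrix.mul_apply, Fin.sum_univ_two]
        try field_simp
        try ring
  have hψ0 : μ₁ * ψ 0 = π 0 * (μ₁ - β) := by
    simp [hψ, hMex, Matrix.vecMul, Matrix.mul_diagonal, dotProduct, Matrix.vecHead,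
      Matrix.vecTail, Fin.sum_univ_two, hd0, hd1]
    field_simp
    try ring
  have hψ1 : μ₁ * ψ 1 = π 0 * β + π 1 * μ₁ := by
    simp [hψ, hMex, Matrix.vecMul, Matrix.mul_diagonal, dotProduct, Matrix.vecHead,
      Matrix.vecTail, Fin.sum_univ_two, hd0, hd1]
    field_simp
    try ring
  have hA0 : μ₁^2 * A 0 = π 0 * (μ₁ - β) := by
    simp [hA, hMM, Matrix.vecMul, Matrix.mul_diagonal, dotProduct, Matrix.vecHead,
      Matrix.vecTail, Fin.sum_univ_two, hd0, hd1]
    field_simp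
    try ring
  have hA1 : μ₁^2 * μ₂ * A 1 = π 0 * β * (μ₁ + μ₂) + π 1 * μ₁^2 := by
    simp [hA, hMM, Matrix.vecMul, Matrix.mul_diagonal, dotProduct, Matrix.vecHead,
      Matrix.vecTail, Fin.sum_univ_two, hd0, hd1]
    field_simp
    try ring
  have e1 : π 0 * (μ₁ - β) + π 1 * μ₂ = 1 := by
    simp [hD, Matrix.mulVec, dotProduct, Fin.sum_univ_two] at c1
    linarith [c1]
  have e2 : π 0 * (μ₁^2 - μ₁*β - β*μ₂) + π 1 * μ₂^2 = 1 := by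
    simp [hD, Matrix.mulVec, dotProduct, Fin.sum_univ_two] at c2
    nlinarith [c2]
  have hps : π 0 + π 1 = 1 := by
    rw [Fin.sum_univ_two] at hπsum; exact hπsum
  have hr0 : ν 0 0 + ν 0 1 = ψ 0 := by rw [← hνrow 0, Fin.sum_univ_two]
  have hr1 : ν 1 0 + ν 1 1 = ψ 1 := by rw [← hνrow 1, Fin.sum_univ_two]
  have hc0 : ν 0 0 + ν 1 0 = π 0 := by rw [← hνcol 0, Fin.sum_univ_two]
  have hc1 : ν 0 1 + ν 1 1 = π 1 := by rw [← hνcol 1, Fin.sum_univ_two]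
  have C2 : (μ₁ - 1) * (μ₂ - 1) = 0 := by
    linear_combination (μ₁+μ₂) * e1 - μ₁*μ₂ * hps - e2
  rw [Fin.sum_univ_two, Fin.sum_univ_two, Fin.sum_univ_two]
  rcases mul_eq_zero.1 C2 with h1 | h2
  · -- case μ₁ = 1
    have hμ : μ₁ = 1 := by linarith
    subst hμ
    have hAψ0 : A 0 = ψ 0 := by linear_combination hA0 - hψ0
    have hAψ1 : A 1 = ψ 1 := by
      have h' : μ₂ * A 1 = μ₂ * ψ 1 := by
        linear_combination hA1 - μ₂ * hψ1 + hps - e1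
      exact mul_left_cancel₀ hμ₂' h'
    have key : ∀ i j, ν i j * a i = ν i j := by
      intro i j
      by_cases hz : ψ i = 0
      · have hrow := hνrow i
        rw [Fin.sum_univ_two, hz] at hrow
        have h0 := hνnn i 0
        have h1 := hνnn i 1
        have hz0 : ν i 0 = 0 := by linarith
        have hz1 : ν i 1 = 0 := by linarith
        have hzz : ν i j = 0 := by fin_cases j <;> first | exact hz0 | exact hz1
        rw [hzz, zero_mul]
      · have hAi : A i = ψ i := by fin_cases i; exacts [hAψ0, hAψ1]
        have ha' : ψ i * a i = ψ i * 1 := by rw [mul_one, ha i, hAi]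
        rw [mul_left_cancel₀ hz ha', mul_one]
    rw [key 0 0, key 0 1, key 1 0, key 1 1]
    have hfin : μ₂ * (ν 0 0 * m 0 + ν 0 1 * m 1 + (ν 1 0 * m 0 + ν 1 1 * m 1)) = μ₂ * 1 := by
      linear_combination (μ₂ * m 0) * hc0 + (μ₂ * m 1) * hc1 + π 0 * hm0 + π 1 * hm1
        - e1 + (μ₂ + 1) * hps
    exact mul_left_cancel₀ hμ₂' hfin
  · -- case μ₂ = 1
    have hμ : μ₂ = 1 := by linarith
    subst hμ
    have hsplit : π 0 * (μ₁ - β - 1) = 0 := by linear_combination e1 - hps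
    have hsq : μ₁^2 ≠ 0 := pow_ne_zero 2 hμ₁'
    rcases mul_eq_zero.1 hsplit with hp0 | hb
    · -- π 0 = 0
      have hψ0z : ψ 0 = 0 := by
        have : μ₁ * ψ 0 = 0 := by rw [hψ0, hp0, zero_mul]
        exact (mul_eq_zero.1 this).resolve_left hμ₁'
      have hrow := hr0
      rw [hψ0z] at hrow
      have h00 : ν 0 0 = 0 := by have := hνnn 0 0; have := hνnn 0 1; linarith
      have h01 : ν 0 1 = 0 := by have := hνnn 0 0; have := hνnn 0 1; linarith
      have h10 : ν 1 0 = 0 := by have := hνnn 1 0; rw [h00] at hc0; linarith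
      have hν11 : ν 1 1 = ψ 1 := by linarith [hr1]
      have hA1v : A 1 = 1 := by
        have h' : μ₁^2 * A 1 = μ₁^2 * 1 := by
          linear_combination hA1 + μ₁^2 * hps + (β * (μ₁ + 1) - μ₁^2 + μ₁^2) * hp0
            - μ₁^2 * hp0
        exact mul_left_cancel₀ hsq h'
      linear_combination (a 0 * m 0) * h00 + (a 0 * m 1) * h01 + (a 1 * m 0) * h10
        + (a 1 * m 1) * hν11 + m 1 * (ha 1) + m 1 * hA1v + hm1
    · -- β = μ₁ - 1
      have hm0v : m 0 = 1 := by
        have h' : μ₁ * m 0 = μ₁ * 1 := by linear_combination hm0 - hb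
        exact mul_left_cancel₀ hμ₁' h'
      have hm1v : m 1 = 1 := by linarith [hm1]
      have hA01 : A 0 + A 1 = 1 := by
        have h' : μ₁^2 * (A 0 + A 1) = μ₁^2 * 1 := by
          linear_combination hA0 + hA1 + μ₁^2 * hps - π 0 * μ₁ * hb
        exact mul_left_cancel₀ hsq h'
      linear_combination (ν 0 0 * a 0 + ν 1 0 * a 1) * hm0v + (ν 0 1 * a 0 + ν 1 1 * a 1) * hm1v
        + a 0 * hr0 + a 1 * hr1 + ha 0 + ha 1 + hA01
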